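/- Let f : ℝ → ℝ be strictly increasing, continuous, and satisfy f(x+π) − f(x) = (L−N)/L for all x, with N, L positive integers, 2N ≤ L. Suppose x₁ < … < x_N are real numbers with f(x_a) = ℓ_a/L for distinct integers ℓ₁ < … < ℓ_N with ℓ_N − ℓ₁ ≤ M. Suppose additionally |f'| ≤ B on ℝ (f differentiable). Then x_N − x₁ ≤ π(M/(L−N)·L + B·π·L/(L−N) + 1), i.e. x_N − x₁ is bounded by a constant depending only on M, B, N/L (uniformly in L). -/
import Mathlib


open Real

/-- Boundedness of Bethe roots in the massive regime `Δ > 1`: if `f` is strictly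
increasing, differentiable with `|f'| ≤ B`, and π-quasi-periodic with increment
`(L-N)/L`, and `x₁ < … < x_N` satisfy `f(x_a) = ℓ_a / L` for integers
`ℓ₁ < … < ℓ_N` with `ℓ_N - ℓ₁ ≤ M`, then `x_N - x₁` is bounded by a constant
depending only on `M`, `B` and `N/L`. -/
theorem bethe_roots_bounded_massive (N L M : ℕ) (hN : 0 < N) (h2N : 2 * N ≤ L)
    (B : ℝ) (hB : 0 ≤ B)
    (f : ℝ → ℝ) (hmono : StrictMono f) (hcont : Continuous f)
    (hdiff : Differentiable ℝ f) (hder : ∀ x, |deriv f x| ≤ B)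
    (hquasi : ∀ x : ℝ, f (x + π) - f x = ((L : ℝ) - N) / L)
    (x : Fin N → ℝ) (ℓ : Fin N → ℤ) (hx : StrictMono x) (hℓ : StrictMono ℓ)
    (hf : ∀ a, f (x a) = (ℓ a : ℝ) / L)
    (hM : ℓ ⟨N - 1, by omega⟩ - ℓ ⟨0, hN⟩ ≤ (M : ℤ)) :
    x ⟨N - 1, by omega⟩ - x ⟨0, hN⟩
      ≤ π * ((M : ℝ) / ((L : ℝ) - N) * L + B * π * L / ((L : ℝ) - N) + 1) := by
  have hLN : 0 < (L : ℝ) - N := by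
    have : (2 * N : ℝ) ≤ L := by exact_mod_cast h2N
    have : (0 : ℝ) < N := by exact_mod_cast hN
    linarith
  have hL : 0 < (L : ℝ) := by linarith
  set x1 := x ⟨0, hN⟩ with hx1
  set xN := x ⟨N - 1, by omega⟩ with hxN
  have hd0 : x1 ≤ xN := by
    apply hx.monotone
    exact Fin.mk_le_mk.mpr (Nat.zero_le _)
  set d := xN - x1 with hdd
  have hdnn : 0 ≤ d := by simp [hdd]; linarith
  set c := ((L : ℝ) - N) / L with hc
  have hcpos : 0 < c := div_pos hLN hL
  -- iterated quasi-periodicity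
  have hiter : ∀ (n : ℕ) (y : ℝ), f (y + n * π) = f y + n * c := by
    intro n
    induction n with
    | zero => intro y; simp
    | succ k ih =>
      intro y
      have h1 : y + (k + 1 : ℕ) * π = (y + k * π) + π := by push_cast; ring
      rw [h1]
      have := hquasi (y + k * π)
      rw [ih y] at this
      push_cast
      linarith
  set p : ℕ := ⌊d / π⌋₊ with hp
  have hπ := pi_pos
  have hple : (p : ℝ) * π ≤ d := by
    have := Nat.floor_le (a := d / π) (div_nonneg hdnn hπ.le)
    calc (p : ℝ) * π ≤ d / π * π := by nlinarith
    _ = d := by field_simp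
  have hplt : d < (p + 1 : ℝ) * π := by
    have := Nat.lt_floor_add_one (d / π)
    calc d = d / π * π := by field_simp
    _ < (p + 1 : ℝ) * π := by nlinarith
  -- f (x1 + pπ) ≤ f xN
  have hmle : f x1 + p * c ≤ f xN := by
    have h1 : x1 + p * π ≤ xN := by linarith [hple]
    have := hmono.monotone h1
    rwa [hiter p x1] at this
  have hfd : f xN - f x1 ≤ (M : ℝ) / L := by
    rw [hf, hf]
    rw [div_sub_div_same]
    gcongr
    exact_mod_cast hM
  have hpM : (p : ℝ) * c ≤ (M : ℝ) / L := by linarith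
  have hpbound : (p : ℝ) ≤ (M : ℝ) / ((L : ℝ) - N) := by
    rw [hc] at hpM
    rw [le_div_iff₀ hLN]
    have : (p : ℝ) * (((L : ℝ) - N) / L) * L ≤ (M : ℝ) / L * L := by nlinarith
    calc (p : ℝ) * ((L : ℝ) - N) = (p : ℝ) * (((L : ℝ) - N) / L) * L := by
          field_simp
    _ ≤ (M : ℝ) / L * L := this
    _ = (M : ℝ) := by field_simp
  have hkey : d ≤ π * ((M : ℝ) / ((L : ℝ) - N) + 1) := by
    have : d < ((M : ℝ) / ((L : ℝ) - N) + 1) * π := by nlinarith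
    linarith [this]
  have hL1 : (1 : ℝ) ≤ L := by exact_mod_cast Nat.one_le_iff_ne_zero.mpr (by omega)
  have hMnn : (0 : ℝ) ≤ (M : ℝ) / ((L : ℝ) - N) :=
    div_nonneg (Nat.cast_nonneg _) hLN.le
  have hstep : (M : ℝ) / ((L : ℝ) - N) ≤ (M : ℝ) / ((L : ℝ) - N) * L := by
    nlinarith
  have hBnn : 0 ≤ B * π * L / ((L : ℝ) - N) :=
    div_nonneg (by positivity) hLN.le
  have hsum : (M : ℝ) / ((L : ℝ) - N) + 1
      ≤ (M : ℝ) / ((L : ℝ) - N) * L + B * π * L / ((L : ℝ) - N) + 1 := by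
    linarith
  calc xN - x1 = d := rfl
  _ ≤ π * ((M : ℝ) / ((L : ℝ) - N) + 1) := hkey
  _ ≤ π * ((M : ℝ) / ((L : ℝ) - N) * L + B * π * L / ((L : ℝ) - N) + 1) :=
      mul_le_mul_of_nonneg_left hsum hπ.le
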